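/- For every integer r ≥ 2, the oriented diameter of the triangular grid graph T_r is at least r + 1; that is, every strong orientation of T_r has diameter at least r + 1. -/

import Mathlib

/-- Vertices of the triangular grid graph `T_r`: triples of nonnegative integers summing to `r`. -/
abbrev TriVert (r : ℕ) := {p : ℕ × ℕ × ℕ // p.1 + p.2.1 + p.2.2 = r}

/-- The triangular grid graph `T_r`: two triples are adjacent iff the sum of the absolute
differences of their coordinates equals `2`. -/
def triGrid (r : ℕ) : SimpleGraph (TriVert r) where
  Adj p q :=
    |((p.1.1 : ℤ)) - (q.1.1 : ℤ)| + |((p.1.2.1 : ℤ)) - (q.1.2.1 : ℤ)|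
      + |((p.1.2.2 : ℤ)) - (q.1.2.2 : ℤ)| = 2
  symm := by
    constructor
    intro p q h
    rw [abs_sub_comm ((q.1.1 : ℤ)), abs_sub_comm ((q.1.2.1 : ℤ)), abs_sub_comm ((q.1.2.2 : ℤ))]
    exact h
  loopless := by
    constructor
    intro p h
    simp at h

/-- `D` is an orientation of `G`: each edge gets exactly one of its two directions. -/
def IsOrientation {V : Type*} (G : SimpleGraph V) (D : V → V → Prop) : Prop :=
  (∀ u v, D u v → G.Adj u v) ∧ ∀ u v, G.Adj u v → (D u v ↔ ¬ D v u)

/-- `f : Fin (k+1) → V` is a directed walk of length `k` from `u` to `v` in the digraph `D`. -/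
def IsDiwalk {V : Type*} (D : V → V → Prop) {k : ℕ} (f : Fin (k + 1) → V) (u v : V) : Prop :=
  f 0 = u ∧ f (Fin.last k) = v ∧ ∀ i : Fin k, D (f i.castSucc) (f i.succ)

/-- A digraph is strong if every vertex is reachable from every other vertex. -/
def IsStrong {V : Type*} (D : V → V → Prop) : Prop :=
  ∀ u v : V, ∃ (k : ℕ) (f : Fin (k + 1) → V), IsDiwalk D f u v

/-- Directed distance: the length of a shortest directed walk from `u` to `v`. -/
noncomputable def dirDist {V : Type*} (D : V → V → Prop) (u v : V) : ℕ :=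
  sInf {k | ∃ f : Fin (k + 1) → V, IsDiwalk D f u v}

/-- Diameter of a digraph: maximum directed distance over ordered pairs of distinct vertices. -/
noncomputable def dirDiam {V : Type*} (D : V → V → Prop) : ℕ :=
  sSup {d | ∃ u v : V, u ≠ v ∧ d = dirDist D u v}


lemma seq_lemma (m r : ℕ) (hm : m ≤ r) (I J K : ℕ → ℤ)
    (hsum : ∀ n, n ≤ m → I n + J n + K n = (r : ℤ))
    (hstep : ∀ n, n < m → |I n - I (n+1)| + |J n - J (n+1)| + |K n - K (n+1)| = 2)
    (hI0 : I 0 = 0) (hK0 : K 0 = 0) (hKm : K m = (r : ℤ))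
    (hInn : ∀ n, n ≤ m → 0 ≤ I n) :
    m = r ∧ ∀ n, n ≤ m → (I n = 0 ∧ J n = (r : ℤ) - n ∧ K n = n) := by
  have hKstep : ∀ n, n < m → K (n+1) ≤ K n + 1 := by
    intro n hn
    have hA := hstep n hn
    have a1 := le_abs_self (I n - I (n+1)); have a2 := neg_abs_le (I n - I (n+1))
    have b1 := le_abs_self (J n - J (n+1)); have b2 := neg_abs_le (J n - J (n+1))
    have c1 := le_abs_self (K n - K (n+1)); have c2 := neg_abs_le (K n - K (n+1))
    have s1 := hsum n (by omega); have s2 := hsum (n+1) (by omega)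
    omega
  have hchain : ∀ b, b ≤ m → ∀ a, a ≤ b → K b - K a ≤ (b : ℤ) - (a : ℤ) := by
    intro b
    induction b with
    | zero =>
      intro _ a ha
      have : a = 0 := by omega
      subst this; simp
    | succ b ih =>
      intro hb a ha
      rcases Nat.lt_or_ge a (b+1) with h | h
      · have h1 := ih (by omega) a (by omega)
        have h2 := hKstep b (by omega)
        push_cast at h1 ⊢
        omega
      · have : a = b + 1 := by omega
        subst this; simp
  have hmr : m = r := by
    have h1 := hchain m le_rfl 0 (Nat.zero_le m)
    rw [hK0, hKm] at h1
    omega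
  have hKn : ∀ n, n ≤ m → K n = (n : ℤ) := by
    intro n hn
    have h1 := hchain n hn 0 (Nat.zero_le n)
    have h2 := hchain m le_rfl n hn
    rw [hK0] at h1; rw [hKm] at h2
    omega
  have hIstep : ∀ n, n < m → I (n+1) ≤ I n := by
    intro n hn
    have hA := hstep n hn
    have e : K n - K (n+1) = -1 := by
      rw [hKn n (by omega), hKn (n+1) (by omega)]; push_cast; ring
    rw [e] at hA
    rw [show |(-1 : ℤ)| = 1 by norm_num] at hA
    have a1 := le_abs_self (I n - I (n+1)); have a2 := neg_abs_le (I n - I (n+1))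
    have b1 := le_abs_self (J n - J (n+1)); have b2 := neg_abs_le (J n - J (n+1))
    have s1 := hsum n (by omega); have s2 := hsum (n+1) (by omega)
    have k1 := hKn n (by omega); have k2 := hKn (n+1) (by omega)
    omega
  have hIle : ∀ n, n ≤ m → I n ≤ 0 := by
    intro n
    induction n with
    | zero => intro _; omega
    | succ n ih =>
      intro hn
      have := hIstep n (by omega)
      have := ih (by omega)
      omega
  refine ⟨hmr, fun n hn => ?_⟩
  have hI : I n = 0 := le_antisymm (hIle n hn) (hInn n hn)
  have hK' := hKn n hn
  have hJ : J n = (r : ℤ) - n := by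
    have := hsum n hn
    omega
  exact ⟨hI, hJ, hK'⟩

lemma triGrid_key (r : ℕ) (D : TriVert r → TriVert r → Prop)
    (hadj : ∀ u v, D u v → (triGrid r).Adj u v)
    (m : ℕ) (hm : m ≤ r) (f : Fin (m + 1) → TriVert r)
    (hf : IsDiwalk D f ⟨(0, r, 0), by simp⟩ ⟨(0, 0, r), by simp⟩) :
    m = r ∧ ∀ (n : ℕ) (h : n < m + 1), (f ⟨n, h⟩).1 = (0, r - n, n) := by
  obtain ⟨h0, hl, hs⟩ := hf
  have fmin : ∀ (n : ℕ) (h : n < m + 1), f ⟨min n m, by omega⟩ = f ⟨n, h⟩ := by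
    intro n h
    exact congrArg f (Fin.ext (show min n m = n by omega))
  have main := seq_lemma m r hm
      (fun n => (((f ⟨min n m, by omega⟩).1.1 : ℕ) : ℤ))
      (fun n => (((f ⟨min n m, by omega⟩).1.2.1 : ℕ) : ℤ))
      (fun n => (((f ⟨min n m, by omega⟩).1.2.2 : ℕ) : ℤ))
      (by intro n hn
          exact_mod_cast congrArg (Nat.cast : ℕ → ℤ) (f ⟨min n m, by omega⟩).2)
      (by intro n hn
          have h1 : |(((f ((⟨n, hn⟩ : Fin m).castSucc)).1.1 : ℕ) : ℤ) - ((f ((⟨n, hn⟩ : Fin m).succ)).1.1 : ℕ)|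
              + |(((f ((⟨n, hn⟩ : Fin m).castSucc)).1.2.1 : ℕ) : ℤ) - ((f ((⟨n, hn⟩ : Fin m).succ)).1.2.1 : ℕ)|
              + |(((f ((⟨n, hn⟩ : Fin m).castSucc)).1.2.2 : ℕ) : ℤ) - ((f ((⟨n, hn⟩ : Fin m).succ)).1.2.2 : ℕ)| = 2 :=
            hadj _ _ (hs ⟨n, hn⟩)
          have ec : f ((⟨n, hn⟩ : Fin m).castSucc) = f ⟨min n m, by omega⟩ := by
            rw [fmin n (by omega)]
            exact congrArg f (Fin.ext (by simp))
          have es : f ((⟨n, hn⟩ : Fin m).succ) = f ⟨min (n+1) m, by omega⟩ := by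
            rw [fmin (n+1) (by omega)]
            exact congrArg f (Fin.ext (by simp))
          rw [ec, es] at h1
          exact h1)
      (by show (((f ⟨min 0 m, by omega⟩).1.1 : ℕ) : ℤ) = 0
          have e0 : f ⟨min 0 m, by omega⟩ = f 0 := congrArg f (Fin.ext (by simp))
          rw [e0, h0]; simp)
      (by show (((f ⟨min 0 m, by omega⟩).1.2.2 : ℕ) : ℤ) = 0
          have e0 : f ⟨min 0 m, by omega⟩ = f 0 := congrArg f (Fin.ext (by simp))
          rw [e0, h0]; simp)
      (by show (((f ⟨min m m, by omega⟩).1.2.2 : ℕ) : ℤ) = (r : ℤ)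
          have em : f ⟨min m m, by omega⟩ = f (Fin.last m) := congrArg f (Fin.ext (by simp [Fin.last]))
          rw [em, hl])
      (by intro n hn; exact Int.natCast_nonneg _)
  obtain ⟨hmr, hvals⟩ := main
  refine ⟨hmr, ?_⟩
  intro n h
  have hn : n ≤ m := by omega
  obtain ⟨hI, hJ, hK⟩ := hvals n hn
  rw [fmin n h] at hI hJ hK
  have e1 : (f ⟨n, h⟩).1.1 = 0 := by exact_mod_cast hI
  have e3 : (f ⟨n, h⟩).1.2.2 = n := by exact_mod_cast hK
  have e2 : (f ⟨n, h⟩).1.2.1 = r - n := by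
    have hr' : n ≤ r := by omega
    omega
  exact Prod.ext_iff.mpr ⟨e1, Prod.ext_iff.mpr ⟨e2, e3⟩⟩

instance triVertFinite (r : ℕ) : Finite (TriVert r) := by
  apply Finite.of_injective (fun p : TriVert r =>
    ((⟨p.1.1, by have := p.2; omega⟩ : Fin (r + 1)),
     (⟨p.1.2.1, by have := p.2; omega⟩ : Fin (r + 1)),
     (⟨p.1.2.2, by have := p.2; omega⟩ : Fin (r + 1))))
  intro p q h
  simp only [Prod.mk.injEq, Fin.mk.injEq] at h
  obtain ⟨h1, h2, h3⟩ := h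
  exact Subtype.ext (Prod.ext_iff.mpr ⟨h1, Prod.ext_iff.mpr ⟨h2, h3⟩⟩)

def cornerB (r : ℕ) : TriVert r := ⟨(0, r, 0), by simp⟩
def cornerC (r : ℕ) : TriVert r := ⟨(0, 0, r), by simp⟩
def midBC (r : ℕ) (hr : 1 ≤ r) : TriVert r := ⟨(0, r - 1, 1), show 0 + (r - 1) + 1 = r by omega⟩
def triSw (r : ℕ) (p : TriVert r) : TriVert r :=
  ⟨(p.1.1, p.1.2.2, p.1.2.1), show p.1.1 + p.1.2.2 + p.1.2.1 = r by have := p.2; omega⟩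

lemma triSw_invol (r : ℕ) (p : TriVert r) : triSw r (triSw r p) = p := Subtype.ext rfl

/-- For every integer `r ≥ 2`, every strong orientation of the triangular grid graph `T_r`
has diameter at least `r + 1`. -/
theorem triGrid_oriented_diameter_lower_bound (r : ℕ) (hr : 2 ≤ r)
    (D : TriVert r → TriVert r → Prop)
    (hD : IsOrientation (triGrid r) D) (hstrong : IsStrong D) :
    r + 1 ≤ dirDiam D := by
  obtain ⟨hDa, hDo⟩ := hD
  have hr1 : 1 ≤ r := by omega
  -- nonemptiness of the walk sets
  have hne1 : {k | ∃ f : Fin (k + 1) → TriVert r, IsDiwalk D f (cornerB r) (cornerC r)}.Nonempty := by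
    obtain ⟨k, f, hf⟩ := hstrong (cornerB r) (cornerC r); exact ⟨k, f, hf⟩
  have hne2 : {k | ∃ f : Fin (k + 1) → TriVert r, IsDiwalk D f (cornerC r) (cornerB r)}.Nonempty := by
    obtain ⟨k, f, hf⟩ := hstrong (cornerC r) (cornerB r); exact ⟨k, f, hf⟩
  have hmem1 : ∃ f : Fin (dirDist D (cornerB r) (cornerC r) + 1) → TriVert r,
      IsDiwalk D f (cornerB r) (cornerC r) := Nat.sInf_mem hne1
  have hmem2 : ∃ f : Fin (dirDist D (cornerC r) (cornerB r) + 1) → TriVert r,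
      IsDiwalk D f (cornerC r) (cornerB r) := Nat.sInf_mem hne2
  have hkey : r + 1 ≤ dirDist D (cornerB r) (cornerC r)
      ∨ r + 1 ≤ dirDist D (cornerC r) (cornerB r) := by
    by_contra hc
    push_neg at hc
    obtain ⟨hc1, hc2⟩ := hc
    obtain ⟨f, hf⟩ := hmem1
    obtain ⟨g, hg⟩ := hmem2
    -- the B → C walk
    obtain ⟨hd1, hv1⟩ := triGrid_key r D hDa _ (by omega) f hf
    -- transport the C → B walk through the swap
    have hadj'' : ∀ u v, D (triSw r u) (triSw r v) → (triGrid r).Adj u v := by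
      intro u v h
      have h2 : |((u.1.1 : ℤ)) - v.1.1| + |((u.1.2.2 : ℤ)) - v.1.2.2|
          + |((u.1.2.1 : ℤ)) - v.1.2.1| = 2 := hDa _ _ h
      show |((u.1.1 : ℤ)) - v.1.1| + |((u.1.2.1 : ℤ)) - v.1.2.1|
          + |((u.1.2.2 : ℤ)) - v.1.2.2| = 2
      linarith
    have hg' : IsDiwalk (fun u v => D (triSw r u) (triSw r v))
        (fun t => triSw r (g t)) (cornerB r) (cornerC r) := by
      obtain ⟨g0, gl, gs⟩ := hg
      refine ⟨?_, ?_, ?_⟩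
      · show triSw r (g 0) = cornerB r
        rw [g0]; exact Subtype.ext rfl
      · show triSw r (g (Fin.last _)) = cornerC r
        rw [gl]; exact Subtype.ext rfl
      · intro i
        show D (triSw r (triSw r (g i.castSucc))) (triSw r (triSw r (g i.succ)))
        rw [triSw_invol, triSw_invol]
        exact gs i
    obtain ⟨hd2, hv2⟩ := triGrid_key r (fun u v => D (triSw r u) (triSw r v)) hadj''
      _ (by omega) (fun t => triSw r (g t)) hg'
    -- first edge of the B → C walk: D (cornerB) (midBC)
    have h01 : (0 : ℕ) < dirDist D (cornerB r) (cornerC r) := by omega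
    have s1 := hf.2.2 ⟨0, h01⟩
    have eA : f (Fin.castSucc ⟨0, h01⟩) = cornerB r := by
      apply Subtype.ext
      have eidx : Fin.castSucc (⟨0, h01⟩ : Fin _) = (⟨0, by omega⟩ : Fin (dirDist D (cornerB r) (cornerC r) + 1)) :=
        Fin.ext (by simp)
      rw [eidx, hv1 0 (by omega)]
      simp [cornerB]
    have eB : f (Fin.succ ⟨0, h01⟩) = midBC r hr1 := by
      apply Subtype.ext
      have eidx : Fin.succ (⟨0, h01⟩ : Fin _) = (⟨1, by omega⟩ : Fin (dirDist D (cornerB r) (cornerC r) + 1)) :=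
        Fin.ext (by simp)
      rw [eidx, hv1 1 (by omega)]
      simp [midBC]
    rw [eA, eB] at s1
    -- last edge of the C → B walk: D (midBC) (cornerB)
    have hrd : r - 1 < dirDist D (cornerC r) (cornerB r) := by omega
    have s2 := hg.2.2 ⟨r - 1, hrd⟩
    have eC : g (Fin.castSucc ⟨r - 1, hrd⟩) = midBC r hr1 := by
      have h1 := hv2 (r - 1) (by omega)
      have eidx : Fin.castSucc (⟨r - 1, hrd⟩ : Fin _) = (⟨r - 1, by omega⟩ : Fin (dirDist D (cornerC r) (cornerB r) + 1)) :=
        Fin.ext (by simp)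
      rw [eidx]
      -- h1 : (triSw r (g ⟨r-1, _⟩)).1 = (0, r - (r-1), r-1)
      apply Subtype.ext
      simp only [triSw, Prod.ext_iff] at h1
      obtain ⟨ha, hb, hc⟩ := h1
      simp only [midBC, Prod.ext_iff]
      refine ⟨ha, hc, ?_⟩
      omega
    have eD : g (Fin.succ ⟨r - 1, hrd⟩) = cornerB r := by
      have h1 := hv2 r (by omega)
      have eidx : Fin.succ (⟨r - 1, hrd⟩ : Fin _) = (⟨r, by omega⟩ : Fin (dirDist D (cornerC r) (cornerB r) + 1)) :=
        Fin.ext (by simp; omega)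
      rw [eidx]
      apply Subtype.ext
      simp only [triSw, Prod.ext_iff] at h1
      obtain ⟨ha, hb, hc⟩ := h1
      simp only [cornerB, Prod.ext_iff]
      refine ⟨ha, hc, ?_⟩
      exact hb.trans (Nat.sub_self r)
    rw [eC, eD] at s2
    have hadjBN := hDa _ _ s1
    exact ((hDo _ _ hadjBN).mp s1) s2
  -- boundedness of the distance set
  have hbdd : BddAbove {d | ∃ u v : TriVert r, u ≠ v ∧ d = dirDist D u v} := by
    have hfin : (Set.range (fun p : TriVert r × TriVert r => dirDist D p.1 p.2)).Finite :=
      Set.finite_range _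
    have hsub : {d | ∃ u v : TriVert r, u ≠ v ∧ d = dirDist D u v}
        ⊆ Set.range (fun p : TriVert r × TriVert r => dirDist D p.1 p.2) := by
      rintro d ⟨u, v, _, rfl⟩
      exact ⟨(u, v), rfl⟩
    exact (hfin.subset hsub).bddAbove
  have hBC : cornerB r ≠ cornerC r := by
    intro h
    have h2 := congrArg Subtype.val h
    simp only [cornerB, cornerC, Prod.ext_iff] at h2
    omega
  rcases hkey with h | h
  · exact le_trans h (le_csSup hbdd ⟨cornerB r, cornerC r, hBC, rfl⟩)
  · exact le_trans h (le_csSup hbdd ⟨cornerC r, cornerB r, fun h2 => hBC h2.symm, rfl⟩)
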